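/- Let P and Q be Borel probability measures on ℝ^d and let z ∈ ℝ^d be such that HD(z,P) > 0 and the infima defining HD(z,P) and HD(z,Q) over closed halfspaces containing z are attained. Then |HD(z,Q)/HD(z,P) − 1| ≤ sup_{H ∈ 𝓗_z} |Q(H)/P(H) − 1|, where 𝓗_z denotes the set of all closed halfspaces of ℝ^d containing z. In particular, if P_n is the empirical measure of an i.i.d. sample from P, then for any t_n > 0 and x ∈ ℝ^d, |HD(t_n x,P_n)/HD(t_n x,P) − 1| ≤ sup_{H ∈ 𝓗_{t_n x}} |P_n(H)/P(H) − 1|. -/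

import Mathlib

open MeasureTheory Filter Topology
open scoped RealInnerProductSpace ENNReal Pointwise

noncomputable section

/-- The collection of closed halfspaces of `ℝ^d`. -/
def halfspaces (d : ℕ) : Set (Set (EuclideanSpace ℝ (Fin d))) :=
  {H | ∃ (h : EuclideanSpace ℝ (Fin d)) (c : ℝ), h ≠ 0 ∧ H = {y | c ≤ ⟪h, y⟫}}

/-- The collection `𝓗_z` of closed halfspaces of `ℝ^d` containing the point `z`. -/
def halfspacesAt {d : ℕ} (z : EuclideanSpace ℝ (Fin d)) : Set (Set (EuclideanSpace ℝ (Fin d))) :=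
  {H | H ∈ halfspaces d ∧ z ∈ H}

/-- The halfspace (Tukey) depth of `x` with respect to the measure `P`:
`HD(x,P) = inf { P(H) : H a closed halfspace containing x }`. -/
def HD {d : ℕ} (P : Measure (EuclideanSpace ℝ (Fin d))) (x : EuclideanSpace ℝ (Fin d)) : ℝ :=
  sInf ((fun H => (P H).toReal) '' halfspacesAt x)

/-- Empirical measure `P_n = (1/n) ∑_{i<n} δ_{X i}`. -/
def empMeasure {d : ℕ} (n : ℕ) (X : ℕ → EuclideanSpace ℝ (Fin d)) :
    Measure (EuclideanSpace ℝ (Fin d)) :=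
  (n : ℝ≥0∞)⁻¹ • ∑ i ∈ Finset.range n, Measure.dirac (X i)

/-- The class `𝓒_t` in the definition of Alexander's capacity function. -/
def capacityClass {d : ℕ} (P : Measure (EuclideanSpace ℝ (Fin d))) (t : ℝ) :
    Set (Set (EuclideanSpace ℝ (Fin d))) :=
  {C | C ∈ halfspaces d ∧ (P C).toReal * (1 - (P C).toReal) ≤ t ∧ (P C).toReal ≤ 1/2} ∪
  {C | ∃ H ∈ halfspaces d, C = Hᶜ ∧ (P H).toReal * (1 - (P H).toReal) ≤ t ∧ 1/2 < (P H).toReal}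

/-- The capacity function `g_c(t) = max(P(E_t), t)/t` of `P` for the class of all
closed halfspaces. -/
def gcap {d : ℕ} (P : Measure (EuclideanSpace ℝ (Fin d))) (t : ℝ) : ℝ :=
  max (P (⋃₀ capacityClass P t)).toReal t / t

lemma empMeasure_finite {d : ℕ} (n : ℕ) (X : ℕ → EuclideanSpace ℝ (Fin d)) :
    IsFiniteMeasure (empMeasure n X) := by
  constructor
  rcases Nat.eq_zero_or_pos n with hn | hn
  · simp [empMeasure, hn]
  · have h1 : empMeasure n X Set.univ = (n : ℝ≥0∞)⁻¹ * n := by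
      simp [empMeasure, Measure.smul_apply, Measure.finset_sum_apply, smul_eq_mul]
    rw [h1, ENNReal.inv_mul_cancel (by exact_mod_cast hn.ne') (ENNReal.natCast_ne_top n)]
    exact ENNReal.one_lt_top

lemma HD_key {d : ℕ} (P Q : Measure (EuclideanSpace ℝ (Fin d))) [IsFiniteMeasure Q]
    (z : EuclideanSpace ℝ (Fin d))
    (ha : 0 < HD P z)
    (hP : ∃ H ∈ halfspacesAt z, (P H).toReal = HD P z)
    (hQ : ∃ H ∈ halfspacesAt z, (Q H).toReal = HD Q z) :
    |HD Q z / HD P z - 1| ≤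
      sSup {r : ℝ | ∃ H ∈ halfspacesAt z, r = |(Q H).toReal / (P H).toReal - 1|} := by
  set a := HD P z with ha_def
  set b := HD Q z with hb_def
  set S := {r : ℝ | ∃ H ∈ halfspacesAt z, r = |(Q H).toReal / (P H).toReal - 1|} with hS
  obtain ⟨H₁, hH₁, hPH₁⟩ := hP
  obtain ⟨H₂, hH₂, hQH₂⟩ := hQ
  -- every halfspace at z has P-measure ≥ a
  have hPa : ∀ H ∈ halfspacesAt z, a ≤ (P H).toReal := by
    intro H hH
    exact csInf_le ⟨0, fun r ⟨G, _, hG⟩ => hG ▸ ENNReal.toReal_nonneg⟩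
      ⟨H, hH, rfl⟩
  have hQb : ∀ H ∈ halfspacesAt z, b ≤ (Q H).toReal := by
    intro H hH
    exact csInf_le ⟨0, fun r ⟨G, _, hG⟩ => hG ▸ ENNReal.toReal_nonneg⟩
      ⟨H, hH, rfl⟩
  have hb0 : 0 ≤ b := by
    refine Real.sInf_nonneg fun r hr => ?_
    obtain ⟨G, _, hG⟩ := hr
    exact hG ▸ ENNReal.toReal_nonneg
  -- S is nonempty and bounded above
  have hSne : S.Nonempty := ⟨_, H₁, hH₁, rfl⟩
  have hSbdd : BddAbove S := by
    refine ⟨(Q Set.univ).toReal / a + 1, fun r hr => ?_⟩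
    obtain ⟨H, hH, hr⟩ := hr
    have h1 : a ≤ (P H).toReal := hPa H hH
    have h2 : (Q H).toReal ≤ (Q Set.univ).toReal :=
      ENNReal.toReal_mono (measure_ne_top Q _) (measure_mono (Set.subset_univ H))
    have h3 : (Q H).toReal / (P H).toReal ≤ (Q Set.univ).toReal / a :=
      div_le_div₀ ENNReal.toReal_nonneg h2 ha h1
    have h4 : 0 ≤ (Q H).toReal / (P H).toReal :=
      div_nonneg ENNReal.toReal_nonneg ENNReal.toReal_nonneg
    rw [hr, abs_sub_le_iff]
    constructor
    · linarith
    · linarith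
  rw [abs_sub_le_iff]
  constructor
  · -- b/a - 1 ≤ sup S, using H₁
    have h1 : b ≤ (Q H₁).toReal := hQb H₁ hH₁
    have h2 : b / a ≤ (Q H₁).toReal / (P H₁).toReal := by
      rw [hPH₁]; exact div_le_div₀ ENNReal.toReal_nonneg h1 ha le_rfl
    have h3 : (Q H₁).toReal / (P H₁).toReal - 1 ≤ |(Q H₁).toReal / (P H₁).toReal - 1| :=
      le_abs_self _
    have h4 : |(Q H₁).toReal / (P H₁).toReal - 1| ≤ sSup S :=
      le_csSup hSbdd ⟨H₁, hH₁, rfl⟩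
    linarith
  · -- 1 - b/a ≤ sup S, using H₂
    have h1 : a ≤ (P H₂).toReal := hPa H₂ hH₂
    have h2 : (Q H₂).toReal / (P H₂).toReal ≤ b / a := by
      rw [← hQH₂]
      exact div_le_div_of_nonneg_left ENNReal.toReal_nonneg ha h1
    have h3 : 1 - (Q H₂).toReal / (P H₂).toReal ≤ |(Q H₂).toReal / (P H₂).toReal - 1| := by
      rw [abs_sub_comm]; exact le_abs_self _
    have h4 : |(Q H₂).toReal / (P H₂).toReal - 1| ≤ sSup S :=
      le_csSup hSbdd ⟨H₂, hH₂, rfl⟩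
    linarith

/-- If `HD(z,P) > 0` and the infima defining `HD(z,P)` and `HD(z,Q)` over
closed halfspaces containing `z` are attained, then
`|HD(z,Q)/HD(z,P) − 1| ≤ sup_{H ∈ 𝓗_z} |Q(H)/P(H) − 1|`.  In particular, the same inequality
holds with `Q` the empirical measure `P_n` of an i.i.d. sample from `P`, at the point `t_n x`. -/
theorem halfspace_depth_ratio_bound
    {d : ℕ} (P Q : Measure (EuclideanSpace ℝ (Fin d)))
    [IsProbabilityMeasure P] [IsProbabilityMeasure Q] :
    (∀ z : EuclideanSpace ℝ (Fin d),
      0 < HD P z →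
      (∃ H ∈ halfspacesAt z, (P H).toReal = HD P z) →
      (∃ H ∈ halfspacesAt z, (Q H).toReal = HD Q z) →
      |HD Q z / HD P z - 1| ≤
        sSup {r : ℝ | ∃ H ∈ halfspacesAt z, r = |(Q H).toReal / (P H).toReal - 1|}) ∧
    (∀ {Ω : Type} [MeasurableSpace Ω] (μ : Measure Ω) [IsProbabilityMeasure μ]
      (X : ℕ → Ω → EuclideanSpace ℝ (Fin d)),
      (∀ i, Measurable (X i)) →
      ProbabilityTheory.iIndepFun X μ →
      (∀ i, Measure.map (X i) μ = P) →
      ∀ (n : ℕ) (ω : Ω) (tn : ℝ) (x : EuclideanSpace ℝ (Fin d)),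
        0 < tn →
        0 < HD P (tn • x) →
        (∃ H ∈ halfspacesAt (tn • x), (P H).toReal = HD P (tn • x)) →
        (∃ H ∈ halfspacesAt (tn • x),
          (empMeasure n (fun i => X i ω) H).toReal = HD (empMeasure n (fun i => X i ω)) (tn • x)) →
        |HD (empMeasure n (fun i => X i ω)) (tn • x) / HD P (tn • x) - 1| ≤
          sSup {r : ℝ | ∃ H ∈ halfspacesAt (tn • x),
            r = |(empMeasure n (fun i => X i ω) H).toReal / (P H).toReal - 1|}) := by
  constructor
  · intro z ha hP hQ
    exact HD_key P Q z ha hP hQ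
  · intro Ω _ μ _ X _ _ _ n ω tn x _ ha hP hQ
    have := empMeasure_finite n (fun i => X i ω)
    exact HD_key P (empMeasure n fun i => X i ω) (tn • x) ha hP hQ
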